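/- (Insertion of s_j² is not needed.) Define a one-step reduction relation ⟶ on words over {0,…,n−2}: w ⟶ w' iff either w = u ++ [j,j] ++ v and w' = u ++ v for some letter j (deletion of a square), or w = u ++ [j,k] ++ v and w' = u ++ [k,j] ++ v with |j−k| ≥ 2 (commutation). If a word W satisfies W ≈ [] (W is equivalent to the empty word, where insertions of squares are allowed), then W can be transformed into the empty word using only deletions of squares and commutations, i.e., the reflexive–transitive closure of ⟶ relates W to []. -/

import Mathlib

/-- The adjacent transposition `s_j = (j, j+1)` in the symmetric group on `Fin n`,
indexed by `j : Fin (n-1)`. -/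
def s {n : ℕ} (j : Fin (n - 1)) : Equiv.Perm (Fin n) :=
  Equiv.swap ⟨j.val, by have := j.isLt; omega⟩ ⟨j.val + 1, by have := j.isLt; omega⟩

/-- `π` sends a word `[j₁, …, j_r]` over the alphabet `{0, …, n-2}` to the product
`s_{j₁} ⋯ s_{j_r}`. -/
def π {n : ℕ} (w : List (Fin (n - 1))) : Equiv.Perm (Fin n) :=
  (w.map s).prod

/-- The two elementary moves on words: (T2) insertion of a square `[j, j]`, and
(T3) commutation of two letters `j, k` with `|j - k| ≥ 2`. -/
inductive Move {n : ℕ} : List (Fin (n - 1)) → List (Fin (n - 1)) → Prop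
  | t2 (u v : List (Fin (n - 1))) (j : Fin (n - 1)) :
      Move (u ++ v) (u ++ [j, j] ++ v)
  | t3 (u v : List (Fin (n - 1))) (j k : Fin (n - 1))
      (h : j.val + 2 ≤ k.val ∨ k.val + 2 ≤ j.val) :
      Move (u ++ [j, k] ++ v) (u ++ [k, j] ++ v)

/-- The equivalence `≈` on words: the reflexive–symmetric–transitive closure of the
moves (T2) and (T3). -/
def WEquiv {n : ℕ} : List (Fin (n - 1)) → List (Fin (n - 1)) → Prop :=
  Relation.EqvGen Move

/-- One-step reduction on words: deletion of a square `[j, j]`, or commutation of two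
letters `j, k` with `|j - k| ≥ 2`. -/
inductive Step {n : ℕ} : List (Fin (n - 1)) → List (Fin (n - 1)) → Prop
  | del (u v : List (Fin (n - 1))) (j : Fin (n - 1)) :
      Step (u ++ [j, j] ++ v) (u ++ v)
  | comm (u v : List (Fin (n - 1))) (j k : Fin (n - 1))
      (h : j.val + 2 ≤ k.val ∨ k.val + 2 ≤ j.val) :
      Step (u ++ [j, k] ++ v) (u ++ [k, j] ++ v)

/- ### Auxiliary lemmas -/

lemma split2 {α : Type*} {u c v a b : List α} {j x y : α}
    (e : u ++ (j :: (c ++ j :: v)) = a ++ (x :: y :: b)) :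
    (∃ u₂, u = a ++ x :: y :: u₂ ∧ b = u₂ ++ (j :: (c ++ j :: v))) ∨
    (u = a ++ [x] ∧ y = j ∧ b = c ++ j :: v) ∨
    (a = u ∧ x = j ∧ ∃ c₂, c = y :: c₂ ∧ b = c₂ ++ j :: v) ∨
    (∃ c₁ c₂, c = c₁ ++ x :: y :: c₂ ∧ a = u ++ j :: c₁ ∧ b = c₂ ++ j :: v) ∨
    (∃ c₁, c = c₁ ++ [x] ∧ a = u ++ j :: c₁ ∧ y = j ∧ b = v) ∨
    (c = [] ∧ a = u ∧ x = j ∧ y = j ∧ b = v) ∨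
    (a = u ++ (j :: c) ∧ x = j ∧ v = y :: b) ∨
    (∃ v₁, v = v₁ ++ x :: y :: b ∧ a = u ++ (j :: (c ++ j :: v₁))) := by
  rcases List.append_eq_append_iff.mp e with ⟨t, ha, hd⟩ | ⟨t, hu, hd⟩
  · -- ha : a = u ++ t, hd : j :: (c ++ j :: v) = t ++ (x :: y :: b)
    cases t with
    | nil =>
      simp only [List.append_nil] at ha
      simp only [List.nil_append] at hd
      injection hd with h1 h2
      cases c with
      | nil =>
        simp only [List.nil_append] at h2
        injection h2 with h3 h4
        exact Or.inr (Or.inr (Or.inr (Or.inr (Or.inr (Or.inl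
          ⟨rfl, ha, h1.symm, h3.symm, h4.symm⟩)))))
      | cons m c₂ =>
        simp only [List.cons_append] at h2
        injection h2 with h3 h4
        exact Or.inr (Or.inr (Or.inl ⟨ha, h1.symm, c₂, by rw [h3], h4.symm⟩))
    | cons j₁ t' =>
      simp only [List.cons_append] at hd
      injection hd with h1 h2
      subst h1
      rcases List.append_eq_append_iff.mp h2 with ⟨s, ht', hs⟩ | ⟨s, hc2, hs⟩
      · -- ht' : t' = c ++ s, hs : j :: v = s ++ (x :: y :: b)
        cases s with
        | nil =>
          simp only [List.nil_append] at hs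
          simp only [List.append_nil] at ht'
          injection hs with h3 h4
          refine Or.inr (Or.inr (Or.inr (Or.inr (Or.inr (Or.inr (Or.inl ⟨?_, h3.symm, h4⟩))))))
          rw [ha, ht']
        | cons j₂ s' =>
          simp only [List.cons_append] at hs
          injection hs with h3 h4
          refine Or.inr (Or.inr (Or.inr (Or.inr (Or.inr (Or.inr (Or.inr ⟨s', h4, ?_⟩))))))
          rw [ha, ht', ← h3]
      · -- hc2 : c = t' ++ s, hs : x :: y :: b = s ++ (j :: v)
        cases s with
        | nil =>
          simp only [List.nil_append] at hs
          simp only [List.append_nil] at hc2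
          injection hs with h3 h4
          refine Or.inr (Or.inr (Or.inr (Or.inr (Or.inr (Or.inr (Or.inl ⟨?_, h3, h4.symm⟩))))))
          rw [ha, hc2]
        | cons m s' =>
          simp only [List.cons_append] at hs
          injection hs with h3 h4
          cases s' with
          | nil =>
            simp only [List.nil_append] at h4
            injection h4 with h5 h6
            exact Or.inr (Or.inr (Or.inr (Or.inr (Or.inl
              ⟨t', by rw [hc2, h3], by rw [ha], h5, h6⟩))))
          | cons m₂ s'' =>
            simp only [List.cons_append] at h4
            injection h4 with h5 h6
            exact Or.inr (Or.inr (Or.inr (Or.inl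
              ⟨t', s'', by rw [hc2, h3, h5], by rw [ha], h6⟩)))
  · -- hu : u = a ++ t, hd : x :: y :: b = t ++ (j :: (c ++ j :: v))
    cases t with
    | nil =>
      simp only [List.append_nil] at hu
      simp only [List.nil_append] at hd
      injection hd with h1 h2
      cases c with
      | nil =>
        simp only [List.nil_append] at h2
        injection h2 with h3 h4
        exact Or.inr (Or.inr (Or.inr (Or.inr (Or.inr (Or.inl ⟨rfl, hu.symm, h1, h3, h4⟩)))))
      | cons m c₂ =>
        simp only [List.cons_append] at h2
        injection h2 with h3 h4
        exact Or.inr (Or.inr (Or.inl ⟨hu.symm, h1, c₂, by rw [← h3], h4⟩))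
    | cons x₁ t' =>
      simp only [List.cons_append] at hd
      injection hd with h1 h2
      cases t' with
      | nil =>
        simp only [List.nil_append] at h2
        injection h2 with h3 h4
        exact Or.inr (Or.inl ⟨by rw [hu, h1], h3, h4⟩)
      | cons y₁ t'' =>
        simp only [List.cons_append] at h2
        injection h2 with h3 h4
        exact Or.inl ⟨t'', by rw [hu, h1, h3], h4⟩

lemma step_del' {n : ℕ} {a b : List (Fin (n - 1))} (u v : List (Fin (n - 1))) (j : Fin (n - 1))
    (h1 : a = u ++ [j, j] ++ v) (h2 : b = u ++ v) : Step a b := by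
  rw [h1, h2]; exact Step.del u v j

lemma step_comm' {n : ℕ} {a b : List (Fin (n - 1))} (u v : List (Fin (n - 1))) (j k : Fin (n - 1))
    (h : j.val + 2 ≤ k.val ∨ k.val + 2 ≤ j.val)
    (h1 : a = u ++ [j, k] ++ v) (h2 : b = u ++ [k, j] ++ v) : Step a b := by
  rw [h1, h2]; exact Step.comm u v j k h

lemma step_cases {n : ℕ} {w w' : List (Fin (n - 1))} (h : Step w w') :
    (∃ a b j, w = a ++ (j :: j :: b) ∧ w' = a ++ b) ∨
    (∃ a b j k, (j.val + 2 ≤ k.val ∨ k.val + 2 ≤ j.val) ∧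
      w = a ++ (j :: k :: b) ∧ w' = a ++ (k :: j :: b)) := by
  cases h with
  | del u v j => exact Or.inl ⟨u, v, j, by simp, rfl⟩
  | comm u v j k hk => exact Or.inr ⟨u, v, j, k, hk, by simp, by simp⟩

lemma move_right {n : ℕ} (c : List (Fin (n - 1))) (u v : List (Fin (n - 1))) (j : Fin (n - 1))
    (hc : ∀ m ∈ c, j.val + 2 ≤ m.val ∨ m.val + 2 ≤ j.val) :
    Relation.ReflTransGen Step (u ++ (j :: (c ++ v))) (u ++ (c ++ (j :: v))) := by
  induction c generalizing u with
  | nil => simp only [List.nil_append]; exact Relation.ReflTransGen.refl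
  | cons m c ih =>
    refine Relation.ReflTransGen.head
      (step_comm' u (c ++ v) j m (hc m List.mem_cons_self) (by simp) rfl) ?_
    have := ih (u ++ [m]) (fun x hx => hc x (List.mem_cons_of_mem _ hx))
    simpa using this

lemma move_left {n : ℕ} (c : List (Fin (n - 1))) (u v : List (Fin (n - 1))) (j : Fin (n - 1))
    (hc : ∀ m ∈ c, j.val + 2 ≤ m.val ∨ m.val + 2 ≤ j.val) :
    Relation.ReflTransGen Step (u ++ (c ++ (j :: v))) (u ++ (j :: (c ++ v))) := by
  induction c generalizing u with
  | nil => simp only [List.nil_append]; exact Relation.ReflTransGen.refl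
  | cons m c ih =>
    refine Relation.ReflTransGen.tail ?_
      (step_comm' u (c ++ v) m j (Or.symm (hc m List.mem_cons_self)) rfl (by simp))
    have := ih (u ++ [m]) (fun x hx => hc x (List.mem_cons_of_mem _ hx))
    simpa using this

lemma ins_pair {n : ℕ} (w : List (Fin (n - 1))) (hw : Relation.ReflTransGen Step w []) :
    ∀ (u c v : List (Fin (n - 1))) (j : Fin (n - 1)),
      (∀ m ∈ c, j.val + 2 ≤ m.val ∨ m.val + 2 ≤ j.val) →
      w = u ++ (j :: (c ++ j :: v)) →
      Relation.ReflTransGen Step (u ++ (c ++ v)) [] := by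
  induction hw using Relation.ReflTransGen.head_induction_on with
  | refl =>
    intro u c v j _ he
    exact absurd he.symm (by simp)
  | head hstep htail ih =>
    intro u c v j hc he
    subst he
    rcases step_cases hstep with ⟨a, b, j₀, hw1, hw2⟩ | ⟨a, b, j₀, k₀, hcm, hw1, hw2⟩
    · -- deletion step
      rw [hw2] at htail ih
      rcases split2 hw1 with ⟨u₂, hu, hb⟩ | ⟨hu, hy, hb⟩ | ⟨hau, hx, c₂, hcc, hb⟩ |
        ⟨c₁, c₂, hcc, ha, hb⟩ | ⟨c₁, hcc, ha, hy, hb⟩ | ⟨hcnil, hau, hx, hy, hb⟩ |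
        ⟨ha, hx, hv⟩ | ⟨v₁, hv, ha⟩
      · -- redex inside u
        refine Relation.ReflTransGen.head
          (step_del' a (u₂ ++ (c ++ v)) j₀ (by rw [hu]; simp) rfl) ?_
        have := ih (a ++ u₂) c v j hc (by rw [hb]; simp)
        simpa using this
      · -- redex = (last of u, first j), deletion: the two letters are j
        subst hy
        rw [hb] at htail
        have hmr := move_right c a v j₀ hc
        have : u ++ (c ++ v) = a ++ (j₀ :: (c ++ v)) := by rw [hu]; simp
        rw [this]
        exact hmr.trans htail
      · -- redex = (first j, head of c): impossible, c would contain j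
        subst hx
        have := hc j₀ (by rw [hcc]; exact List.mem_cons_self)
        omega
      · -- redex inside c
        refine Relation.ReflTransGen.head
          (step_del' (u ++ c₁) (c₂ ++ v) j₀ (by rw [hcc]; simp) rfl) ?_
        have := ih u (c₁ ++ c₂) v j
          (fun m hm => hc m (by rw [hcc]; simp only [List.mem_append, List.mem_cons] at hm ⊢; tauto))
          (by rw [ha, hb]; simp)
        simpa using this
      · -- redex = (last of c, second j): impossible, c would contain j
        subst hy
        have := hc j₀ (by rw [hcc]; simp)
        omega
      · -- redex = the pair itself
        subst hcnil
        rw [hau, hb] at htail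
        simpa using htail
      · -- redex = (second j, head of v)
        subst hx
        rw [ha] at htail
        rw [hv]
        have hml := move_left c u b j₀ hc
        have h2 : Relation.ReflTransGen Step (u ++ (j₀ :: (c ++ b))) [] := by
          simpa using htail
        exact hml.trans h2
      · -- redex inside v
        refine Relation.ReflTransGen.head
          (step_del' (u ++ c ++ v₁) b j₀ (by rw [hv]; simp) rfl) ?_
        have := ih u c (v₁ ++ b) j hc (by rw [ha]; simp)
        simpa using this
    · -- commutation step
      rw [hw2] at htail ih
      rcases split2 hw1 with ⟨u₂, hu, hb⟩ | ⟨hu, hy, hb⟩ | ⟨hau, hx, c₂, hcc, hb⟩ |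
        ⟨c₁, c₂, hcc, ha, hb⟩ | ⟨c₁, hcc, ha, hy, hb⟩ | ⟨hcnil, hau, hx, hy, hb⟩ |
        ⟨ha, hx, hv⟩ | ⟨v₁, hv, ha⟩
      · -- redex inside u
        refine Relation.ReflTransGen.head
          (step_comm' a (u₂ ++ (c ++ v)) j₀ k₀ hcm (by rw [hu]; simp) rfl) ?_
        have := ih (a ++ k₀ :: j₀ :: u₂) c v j hc (by rw [hb]; simp)
        simpa using this
      · -- redex = (last of u, first j)
        subst hy
        have := ih a (j₀ :: c) v k₀
          (by
            intro m hm
            rcases List.mem_cons.mp hm with h | h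
            · subst h; exact Or.symm hcm
            · exact hc m h)
          (by rw [hb]; simp)
        rw [hu]
        simpa using this
      · -- redex = (first j, head of c)
        subst hx
        have := ih (u ++ [k₀]) c₂ v j₀
          (fun m hm => hc m (by rw [hcc]; exact List.mem_cons_of_mem _ hm))
          (by rw [hau, hb]; simp)
        rw [hcc]
        simpa using this
      · -- redex inside c
        refine Relation.ReflTransGen.head
          (step_comm' (u ++ c₁) (c₂ ++ v) j₀ k₀ hcm (by rw [hcc]; simp) rfl) ?_
        have := ih u (c₁ ++ k₀ :: j₀ :: c₂) v j
          (fun m hm => hc m (by rw [hcc]; simp only [List.mem_append, List.mem_cons] at hm ⊢; tauto))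
          (by rw [ha, hb]; simp)
        simpa using this
      · -- redex = (last of c, second j)
        subst hy
        have := ih u c₁ (j₀ :: v) k₀
          (fun m hm => hc m (by rw [hcc]; exact List.mem_append_left _ hm))
          (by rw [ha, hb]; simp)
        rw [hcc]
        simpa using this
      · -- redex = the pair itself: impossible (letters equal, no commutation)
        subst hx; subst hy
        omega
      · -- redex = (second j, head of v)
        subst hx
        have := ih u (c ++ [k₀]) b j₀
          (by
            intro m hm
            rcases List.mem_append.mp hm with h | h
            · exact hc m h
            · simp only [List.mem_singleton] at h; subst h; exact hcm)
          (by rw [ha]; simp)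
        rw [hv]
        simpa using this
      · -- redex inside v
        refine Relation.ReflTransGen.head
          (step_comm' (u ++ c ++ v₁) b j₀ k₀ hcm (by rw [hv]; simp) rfl) ?_
        have := ih u c (v₁ ++ k₀ :: j₀ :: b) j hc (by rw [ha]; simp)
        simpa using this

/-- insertion of `s_j²` is not needed: if `W ≈ []`, then `W` can be reduced
to the empty word using only deletions of squares and commutations. -/
theorem reduces_to_nil_of_wequiv_nil {n : ℕ} (hn : 2 ≤ n)
    (W : List (Fin (n - 1))) (h : WEquiv W []) :
    Relation.ReflTransGen Step W [] := by
  have key : ∀ x y : List (Fin (n - 1)), Relation.EqvGen Move x y →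
      (Relation.ReflTransGen Step x [] ↔ Relation.ReflTransGen Step y []) := by
    intro x y hxy
    induction hxy with
    | rel x y hm =>
      cases hm with
      | t2 u v j =>
        constructor
        · intro hx
          exact Relation.ReflTransGen.head (Step.del u v j) hx
        · intro hy
          have := ins_pair _ hy u [] v j (by simp) (by simp)
          simpa using this
      | t3 u v j k hjk =>
        constructor
        · intro hx
          exact Relation.ReflTransGen.head (Step.comm u v k j (Or.symm hjk)) hx
        · intro hy
          exact Relation.ReflTransGen.head (Step.comm u v j k hjk) hy
    | refl x => exact Iff.rfl
    | symm x y _ ih => exact ih.symm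
    | trans x y z _ _ ih1 ih2 => exact ih1.trans ih2
  exact (key W [] h).mpr Relation.ReflTransGen.refl
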